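/- The integral −(π/32) ∫₀¹ x^{1/4} (1 − x^{1/2}) · log((1 − (1−x)^{1/2})/x^{1/2}) · dx/(x(1−x)) equals (√π Γ(1/4)² / (32√2)) · ₃F₂(1/2,1/2,1; 3/2, 3/4; 1) − (√π Γ(3/4)² / (8√2)) · ₃F₂(1/2,1/2,1; 3/2, 5/4; 1). -/

import Mathlib

/-- Pochhammer symbol (a)ₘ = a(a+1)⋯(a+m−1). -/
noncomputable def poch (a : ℝ) (m : ℕ) : ℝ := ∏ i ∈ Finset.range m, (a + i)

/-- Generalized hypergeometric series ₃F₂(a,b,c; e,f; z). -/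
noncomputable def F32 (a b c e f z : ℝ) : ℝ :=
  ∑' n : ℕ, poch a n * poch b n * poch c n / (poch e n * poch f n * n.factorial) * z ^ n

open MeasureTheory Real Set

lemma poch_succ (a : ℝ) (n : ℕ) : poch a (n+1) = poch a n * (a + n) := by
  simp [poch, Finset.prod_range_succ]

lemma poch_pos {a : ℝ} (ha : 0 < a) (n : ℕ) : 0 < poch a n := by
  refine Finset.prod_pos fun i _ => by positivity

lemma poch_one (n : ℕ) : poch 1 n = n.factorial := by
  induction n with
  | zero => simp [poch]
  | succ n ih => rw [poch_succ, ih]; push_cast [Nat.factorial_succ]; ring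

lemma poch_shift (a : ℝ) (n : ℕ) : a * poch (a+1) n = poch a n * (a + n) := by
  induction n with
  | zero => simp [poch]
  | succ n ih => rw [poch_succ, poch_succ, ← mul_assoc, ih]; push_cast; ring

lemma Gamma_poch {a : ℝ} (ha : 0 < a) (n : ℕ) :
    Real.Gamma (a + n) = poch a n * Real.Gamma a := by
  induction n with
  | zero => simp [poch]
  | succ n ih =>
      have h : a + (n+1 : ℕ) = (a + n) + 1 := by push_cast; ring
      rw [h, Real.Gamma_add_one (by positivity), ih, poch_succ]; ring

lemma realBeta {a b : ℝ} (ha : 0 < a) (hb : 0 < b) :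
    ∫ x in (0:ℝ)..1, x ^ (a-1) * (1-x) ^ (b-1) =
      Real.Gamma a * Real.Gamma b / Real.Gamma (a+b) := by
  have h := Complex.Gamma_mul_Gamma_eq_betaIntegral (s := a) (t := b) (by simpa) (by simpa)
  have hbeta : Complex.betaIntegral a b =
      ((∫ x in (0:ℝ)..1, x ^ (a-1) * (1-x) ^ (b-1) : ℝ) : ℂ) := by
    rw [Complex.betaIntegral, ← intervalIntegral.integral_ofReal]
    refine intervalIntegral.integral_congr fun x hx => ?_
    rw [uIcc_of_le (by norm_num)] at hx
    rw [Complex.ofReal_mul,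
      show ((a:ℂ)-1) = ((a-1:ℝ):ℂ) by push_cast; ring,
      show ((b:ℂ)-1) = ((b-1:ℝ):ℂ) by push_cast; ring,
      show (1 - (x:ℂ)) = ((1-x:ℝ):ℂ) by push_cast; ring,
      ← Complex.ofReal_cpow hx.1, ← Complex.ofReal_cpow (by linarith [hx.2])]
  rw [hbeta, ← Complex.ofReal_add, Complex.Gamma_ofReal, Complex.Gamma_ofReal,
    Complex.Gamma_ofReal, ← Complex.ofReal_mul, ← Complex.ofReal_mul] at h
  have := Complex.ofReal_injective h
  have hG : Real.Gamma (a+b) ≠ 0 := (Real.Gamma_pos_of_pos (by linarith)).ne'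
  field_simp
  linarith [this]

lemma integrableOn_one_sub_rpow {r : ℝ} (h : -1 < r) :
    IntegrableOn (fun u => (1-u) ^ r) (Ioo (0:ℝ) 1) := by
  have h1 : IntervalIntegrable (fun x : ℝ => x ^ r) volume 0 1 :=
    intervalIntegral.intervalIntegrable_rpow' h
  have h2 := (h1.comp_sub_left 1).symm
  simp only [sub_zero, sub_self] at h2
  rw [intervalIntegrable_iff_integrableOn_Ioo_of_le (by norm_num)] at h2
  exact h2

lemma log_le_eight_rpow {y : ℝ} (hy : 0 < y) : Real.log y ≤ 8 * y ^ ((1:ℝ)/8) := by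
  have h1 : Real.log (y ^ ((1:ℝ)/8)) = (1/8) * Real.log y := Real.log_rpow hy _
  have h2 : Real.log (y ^ ((1:ℝ)/8)) ≤ y ^ ((1:ℝ)/8) - 1 :=
    Real.log_le_sub_one_of_pos (by positivity)
  nlinarith [Real.rpow_nonneg hy.le ((1:ℝ)/8)]

lemma G_nonneg {s u : ℝ} (hu : u ∈ Ioo (0:ℝ) 1) :
    0 ≤ Real.log ((1+u)/(1-u)) / (2*u) * (1-u^2) ^ (-s) := by
  obtain ⟨h0, h1⟩ := hu
  have hden : (0:ℝ) < 1 - u := by linarith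
  have hlog : 0 ≤ Real.log ((1+u)/(1-u)) := by
    apply Real.log_nonneg; rw [le_div_iff₀ hden]; linarith
  have : (0:ℝ) < 1 - u^2 := by nlinarith
  positivity

lemma G_bound {s u : ℝ} (hs0 : 0 < s) (hs : s ≤ 3/4) (hu : u ∈ Ioo (0:ℝ) 1) :
    Real.log ((1+u)/(1-u)) / (2*u) * (1-u^2) ^ (-s) ≤ 4 + 16*(1-u) ^ (-(7/8) : ℝ) := by
  obtain ⟨h0, h1⟩ := hu
  have hd : (0:ℝ) < 1 - u := by linarith
  have hn : (0:ℝ) < 1 + u := by linarith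
  have hq : (0:ℝ) < 1 - u^2 := by nlinarith
  have hlog : 0 ≤ Real.log ((1+u)/(1-u)) := by
    apply Real.log_nonneg; rw [le_div_iff₀ hd]; linarith
  have hsplit : (1-u^2) ^ (-s) ≤ (1-u) ^ (-s) := by
    rw [show (1:ℝ)-u^2 = (1-u)*(1+u) by ring, Real.mul_rpow hd.le hn.le]
    calc (1-u) ^ (-s) * (1+u) ^ (-s) ≤ (1-u) ^ (-s) * 1 :=
          mul_le_mul_of_nonneg_left
            (Real.rpow_le_one_of_one_le_of_nonpos (by linarith) (by linarith))
            (Real.rpow_nonneg hd.le _)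
      _ = (1-u) ^ (-s) := mul_one _
  have hrpow78 : (0:ℝ) ≤ 16*(1-u) ^ (-(7/8) : ℝ) := by positivity
  rcases le_or_gt u (1/2) with hc | hc
  · have hL : Real.log ((1+u)/(1-u)) ≤ 2*u/(1-u) := by
      have h2 := Real.log_le_sub_one_of_pos (x := (1+u)/(1-u)) (by positivity)
      have he : (1+u)/(1-u) - 1 = 2*u/(1-u) := by field_simp; ring
      linarith [he ▸ h2]
    have h2u : (0:ℝ) < 2*u := by linarith
    have hA : Real.log ((1+u)/(1-u)) / (2*u) ≤ 2 := by
      rw [div_le_iff₀ h2u]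
      calc Real.log ((1+u)/(1-u)) ≤ 2*u/(1-u) := hL
        _ ≤ 2 * (2*u) := by rw [div_le_iff₀ hd]; nlinarith
    have hB : (1-u) ^ (-s) ≤ 2 := by
      calc (1-u) ^ (-s) ≤ (1-u) ^ (-1 : ℝ) :=
            Real.rpow_le_rpow_of_exponent_ge hd (by linarith) (by linarith)
        _ = (1-u)⁻¹ := Real.rpow_neg_one _
        _ ≤ 2 := by rw [inv_le_comm₀ (by linarith) (by norm_num)]; linarith
    calc Real.log ((1+u)/(1-u)) / (2*u) * (1-u^2) ^ (-s)
        ≤ Real.log ((1+u)/(1-u)) / (2*u) * (1-u) ^ (-s) :=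
          mul_le_mul_of_nonneg_left hsplit (by positivity)
      _ ≤ 2 * 2 := mul_le_mul hA hB (Real.rpow_nonneg hd.le _) (by norm_num)
      _ ≤ 4 + 16*(1-u) ^ (-(7/8) : ℝ) := by linarith
  · have h2u : (1:ℝ) ≤ 2*u := by linarith
    have hL : Real.log ((1+u)/(1-u)) ≤ 16 * (1-u) ^ (-(1/8) : ℝ) := by
      calc Real.log ((1+u)/(1-u)) ≤ Real.log (2/(1-u)) := by
            apply Real.log_le_log (by positivity)
            gcongr
            linarith
          -- fallback handled below
        _ ≤ 8 * (2/(1-u)) ^ ((1:ℝ)/8) := log_le_eight_rpow (by positivity)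
        _ = 8 * (2 ^ ((1:ℝ)/8) * (1-u) ^ (-(1/8) : ℝ)) := by
            rw [Real.div_rpow (by norm_num) hd.le, Real.rpow_neg hd.le, div_eq_mul_inv]
        _ ≤ 8 * (2 * (1-u) ^ (-(1/8) : ℝ)) := by
            have : (2:ℝ) ^ ((1:ℝ)/8) ≤ 2 := by
              calc (2:ℝ) ^ ((1:ℝ)/8) ≤ (2:ℝ) ^ (1:ℝ) :=
                    Real.rpow_le_rpow_of_exponent_le (by norm_num) (by norm_num)
                _ = 2 := Real.rpow_one 2
            have h8 : (0:ℝ) ≤ (1-u) ^ (-(1/8) : ℝ) := Real.rpow_nonneg hd.le _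
            nlinarith
        _ = 16 * (1-u) ^ (-(1/8) : ℝ) := by ring
    have hmain : Real.log ((1+u)/(1-u)) / (2*u) * (1-u^2) ^ (-s)
        ≤ 16 * (1-u) ^ (-(7/8) : ℝ) := by
      have hdiv : Real.log ((1+u)/(1-u)) / (2*u) ≤ Real.log ((1+u)/(1-u)) := by
        rw [div_le_iff₀ (by linarith)]
        nlinarith
      calc Real.log ((1+u)/(1-u)) / (2*u) * (1-u^2) ^ (-s)
          ≤ Real.log ((1+u)/(1-u)) * (1-u) ^ (-s) := by
            apply mul_le_mul hdiv hsplit (Real.rpow_nonneg hq.le _) hlog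
        _ ≤ (16 * (1-u) ^ (-(1/8) : ℝ)) * (1-u) ^ (-s) :=
            mul_le_mul_of_nonneg_right hL (Real.rpow_nonneg hd.le _)
        _ = 16 * (1-u) ^ (-(1/8) - s) := by
            rw [mul_assoc, ← Real.rpow_add hd]; ring_nf
        _ ≤ 16 * (1-u) ^ (-(7/8) : ℝ) := by
            have := Real.rpow_le_rpow_of_exponent_ge hd (by linarith)
              (show -(7/8 : ℝ) ≤ -(1/8) - s by linarith)
            linarith
    linarith

lemma rpow_neg_split {s u : ℝ} (hs : 0 ≤ s) (hu : u ∈ Ioo (0:ℝ) 1) :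
    (1-u^2) ^ (-s) ≤ (1-u) ^ (-s) := by
  obtain ⟨h0, h1⟩ := hu
  have hd : (0:ℝ) < 1 - u := by linarith
  have hn : (0:ℝ) < 1 + u := by linarith
  rw [show (1:ℝ)-u^2 = (1-u)*(1+u) by ring, Real.mul_rpow hd.le hn.le]
  calc (1-u) ^ (-s) * (1+u) ^ (-s) ≤ (1-u) ^ (-s) * 1 :=
        mul_le_mul_of_nonneg_left
          (Real.rpow_le_one_of_one_le_of_nonpos (by linarith) (by linarith))
          (Real.rpow_nonneg hd.le _)
    _ = (1-u) ^ (-s) := mul_one _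

lemma hasSum_pointwise {s u : ℝ} (hu : u ∈ Ioo (0:ℝ) 1) :
    HasSum (fun n : ℕ => 1/(2*(n:ℝ)+1) * (u^(2*n) * (1-u^2) ^ (-s)))
      (Real.log ((1+u)/(1-u)) / (2*u) * (1-u^2) ^ (-s)) := by
  obtain ⟨h0, h1⟩ := hu
  have hd : (0:ℝ) < 1 - u := by linarith
  have hn : (0:ℝ) < 1 + u := by linarith
  have h := Real.hasSum_log_sub_log_of_abs_lt_one (x := u) (by rw [abs_of_pos h0]; exact h1)
  have h2 := h.mul_right ((1-u^2) ^ (-s) / (2*u))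
  have hfun : (fun k : ℕ => (2:ℝ) * (1/(2*(k:ℝ)+1)) * u^(2*k+1) * ((1-u^2) ^ (-s) / (2*u)))
      = fun n : ℕ => 1/(2*(n:ℝ)+1) * (u^(2*n) * (1-u^2) ^ (-s)) := by
    funext k
    rw [pow_succ]
    have hk : (2*(k:ℝ)+1) ≠ 0 := by positivity
    field_simp
  have hval : (Real.log (1+u) - Real.log (1-u)) * ((1-u^2) ^ (-s) / (2*u))
      = Real.log ((1+u)/(1-u)) / (2*u) * (1-u^2) ^ (-s) := by
    rw [Real.log_div hn.ne' hd.ne']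
    field_simp
  rwa [hfun, hval] at h2

lemma fn_contOn (s : ℝ) (n : ℕ) :
    ContinuousOn (fun u : ℝ => 1/(2*(n:ℝ)+1) * (u^(2*n) * (1-u^2) ^ (-s))) (Ioo (0:ℝ) 1) := by
  apply ContinuousOn.mul continuousOn_const
  apply ContinuousOn.mul (Continuous.continuousOn (continuous_pow _))
  apply ContinuousOn.rpow_const
  · exact (continuous_const.sub (continuous_pow 2)).continuousOn
  · intro x hx
    obtain ⟨h0, h1⟩ := hx
    left; nlinarith

lemma G_contOn (s : ℝ) :
    ContinuousOn (fun u : ℝ => Real.log ((1+u)/(1-u)) / (2*u) * (1-u^2) ^ (-s))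
      (Ioo (0:ℝ) 1) := by
  apply ContinuousOn.mul
  · apply ContinuousOn.div
    · apply ContinuousOn.log
      · apply ContinuousOn.div
        · exact (continuous_const.add continuous_id).continuousOn
        · exact (continuous_const.sub continuous_id).continuousOn
        · intro x hx; exact (by linarith [hx.2] : (0:ℝ) < 1 - x).ne'
      · intro x hx
        have : (0:ℝ) < (1+x)/(1-x) := by
          apply div_pos (by linarith [hx.1]) (by linarith [hx.2])
        exact this.ne'
    · exact (continuous_const.mul continuous_id).continuousOn
    · intro x hx; exact (by linarith [hx.1] : (0:ℝ) < 2*x).ne'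
  · apply ContinuousOn.rpow_const
    · exact (continuous_const.sub (continuous_pow 2)).continuousOn
    · intro x hx; obtain ⟨h0, h1⟩ := hx; left; nlinarith

lemma fn_integrableOn {s : ℝ} (hs0 : 0 < s) (hs : s < 1) (n : ℕ) :
    IntegrableOn (fun u : ℝ => 1/(2*(n:ℝ)+1) * (u^(2*n) * (1-u^2) ^ (-s)))
      (Ioo (0:ℝ) 1) := by
  apply Integrable.mono (integrableOn_one_sub_rpow (r := -s) (by linarith))
    ((fn_contOn s n).aestronglyMeasurable measurableSet_Ioo)
  rw [ae_restrict_iff' measurableSet_Ioo]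
  filter_upwards with u hu
  obtain ⟨h0, h1⟩ := hu
  have hd : (0:ℝ) < 1 - u := by linarith
  have hq : (0:ℝ) < 1 - u^2 := by nlinarith
  have hnonneg : (0:ℝ) ≤ 1/(2*(n:ℝ)+1) * (u^(2*n) * (1-u^2) ^ (-s)) := by positivity
  rw [Real.norm_eq_abs, Real.norm_eq_abs, abs_of_nonneg hnonneg,
    abs_of_nonneg (Real.rpow_nonneg hd.le _)]
  have h1n : 1/(2*(n:ℝ)+1) ≤ 1 := by
    rw [div_le_one (by positivity)]; linarith [Nat.cast_nonneg (α := ℝ) n]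
  have h2n : u^(2*n) ≤ 1 := pow_le_one₀ h0.le h1.le
  calc 1/(2*(n:ℝ)+1) * (u^(2*n) * (1-u^2) ^ (-s)) ≤ 1 * (1 * (1-u^2) ^ (-s)) := by
        apply mul_le_mul h1n ?_ (by positivity) (by norm_num)
        exact mul_le_mul_of_nonneg_right h2n (Real.rpow_nonneg hq.le _)
    _ = (1-u^2) ^ (-s) := by ring
    _ ≤ (1-u) ^ (-s) := rpow_neg_split hs0.le ⟨h0, h1⟩

lemma G_integrableOn {s : ℝ} (hs0 : 0 < s) (hs : s ≤ 3/4) :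
    IntegrableOn (fun u : ℝ => Real.log ((1+u)/(1-u)) / (2*u) * (1-u^2) ^ (-s))
      (Ioo (0:ℝ) 1) := by
  have hmaj : IntegrableOn (fun u : ℝ => 4 + 16*(1-u) ^ (-(7/8) : ℝ)) (Ioo (0:ℝ) 1) := by
    apply Integrable.add
    · exact integrableOn_const (by simp [Real.volume_Ioo])
    · exact (integrableOn_one_sub_rpow (by norm_num)).const_mul 16
  apply Integrable.mono hmaj ((G_contOn s).aestronglyMeasurable measurableSet_Ioo)
  rw [ae_restrict_iff' measurableSet_Ioo]
  filter_upwards with u hu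
  have h1 : (0:ℝ) ≤ 16*(1-u) ^ (-(7/8) : ℝ) := by
    have : (0:ℝ) ≤ (1-u) ^ (-(7/8) : ℝ) := Real.rpow_nonneg (by linarith [hu.2]) _
    linarith
  rw [Real.norm_eq_abs, Real.norm_eq_abs, abs_of_nonneg (G_nonneg hu),
    abs_of_nonneg (by linarith : (0:ℝ) ≤ 4 + 16*(1-u) ^ (-(7/8) : ℝ))]
  exact G_bound hs0 hs hu

lemma hasSumK {s : ℝ} (hs0 : 0 < s) (hs : s ≤ 3/4) :
    HasSum (fun n : ℕ => ∫ u in Ioo (0:ℝ) 1, 1/(2*(n:ℝ)+1) * (u^(2*n) * (1-u^2) ^ (-s)))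
      (∫ u in Ioo (0:ℝ) 1, Real.log ((1+u)/(1-u)) / (2*u) * (1-u^2) ^ (-s)) := by
  refine MeasureTheory.hasSum_integral_of_dominated_convergence
    (F := fun (n : ℕ) (u : ℝ) => 1/(2*(n:ℝ)+1) * (u^(2*n) * (1-u^2) ^ (-s)))
    (fun n u => 1/(2*(n:ℝ)+1) * (u^(2*n) * (1-u^2) ^ (-s)))
    (fun n => (fn_contOn s n).aestronglyMeasurable measurableSet_Ioo) ?_ ?_ ?_ ?_
  · intro n
    rw [ae_restrict_iff' measurableSet_Ioo]
    filter_upwards with u hu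
    obtain ⟨h0, h1⟩ := hu
    have hq : (0:ℝ) < 1 - u^2 := by nlinarith
    have : (0:ℝ) ≤ 1/(2*(n:ℝ)+1) * (u^(2*n) * (1-u^2) ^ (-s)) := by positivity
    rw [Real.norm_eq_abs, abs_of_nonneg this]
  · rw [ae_restrict_iff' measurableSet_Ioo]
    filter_upwards with u hu
    exact (hasSum_pointwise hu).summable
  · apply Integrable.congr (G_integrableOn hs0 hs)
    rw [Filter.EventuallyEq, ae_restrict_iff' measurableSet_Ioo]
    filter_upwards with u hu
    exact ((hasSum_pointwise hu).tsum_eq).symm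
  · rw [ae_restrict_iff' measurableSet_Ioo]
    filter_upwards with u hu
    exact hasSum_pointwise hu

lemma sq_image_Ioo : (fun u : ℝ => u^2) '' Ioo (0:ℝ) 1 = Ioo (0:ℝ) 1 := by
  ext x
  constructor
  · rintro ⟨u, ⟨h0, h1⟩, rfl⟩
    exact ⟨by positivity, by simp only []; nlinarith⟩
  · rintro ⟨h0, h1⟩
    exact ⟨Real.sqrt x, ⟨Real.sqrt_pos.2 h0, by
      rw [show (1:ℝ) = Real.sqrt 1 by simp]; exact Real.sqrt_lt_sqrt h0.le h1⟩,
      Real.sq_sqrt h0.le⟩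

lemma J_eval {s : ℝ} (hs0 : 0 < s) (hs1 : s < 1) (n : ℕ) :
    ∫ u in Ioo (0:ℝ) 1, u^(2*n) * (1-u^2) ^ (-s) =
      (1/2) * (Real.Gamma ((n:ℝ)+1/2) * Real.Gamma (1-s) / Real.Gamma ((n:ℝ)+3/2-s)) := by
  have hbeta := realBeta (a := (n:ℝ)+1/2) (b := 1-s) (by positivity) (by linarith)
  have he1 : ((n:ℝ)+1/2) - 1 = (n:ℝ) - 1/2 := by ring
  have he2 : (1-s) - 1 = -s := by ring
  have he3 : ((n:ℝ)+1/2) + (1-s) = (n:ℝ)+3/2-s := by ring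
  rw [he1, he2, he3] at hbeta
  rw [intervalIntegral.integral_of_le (by norm_num : (0:ℝ) ≤ 1),
    MeasureTheory.integral_Ioc_eq_integral_Ioo] at hbeta
  have hderiv : ∀ u ∈ Ioo (0:ℝ) 1,
      HasDerivWithinAt (fun u : ℝ => u^2) (2*u) (Ioo (0:ℝ) 1) u := by
    intro u _
    simpa using (hasDerivAt_pow 2 u).hasDerivWithinAt
  have hinj : InjOn (fun u : ℝ => u^2) (Ioo (0:ℝ) 1) := by
    intro a ha b hb h
    simp only [] at h
    have : Real.sqrt (a^2) = Real.sqrt (b^2) := by rw [h]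
    rwa [Real.sqrt_sq ha.1.le, Real.sqrt_sq hb.1.le] at this
  have hsub := MeasureTheory.integral_image_eq_integral_abs_deriv_smul
    measurableSet_Ioo hderiv hinj (fun x : ℝ => x ^ ((n:ℝ)-1/2) * (1-x) ^ (-s))
  rw [sq_image_Ioo] at hsub
  rw [hsub] at hbeta
  have hcong : ∫ u in Ioo (0:ℝ) 1,
      |2*u| • ((u^2 : ℝ) ^ ((n:ℝ)-1/2) * (1-u^2) ^ (-s)) =
      ∫ u in Ioo (0:ℝ) 1, 2 * (u^(2*n) * (1-u^2) ^ (-s)) := by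
    apply MeasureTheory.setIntegral_congr_fun measurableSet_Ioo
    intro u hu
    obtain ⟨h0, h1⟩ := hu
    have habs : |2*u| = 2*u := abs_of_pos (by linarith)
    simp only [smul_eq_mul, habs]
    have hpow : (u^2 : ℝ) ^ ((n:ℝ)-1/2) = u ^ (2*((n:ℝ)-1/2)) := by
      rw [← Real.rpow_natCast u 2, ← Real.rpow_mul h0.le]
      norm_num
    rw [hpow]
    have : 2*u * (u ^ (2*((n:ℝ)-1/2)) * (1-u^2) ^ (-s))
        = 2 * ((u ^ (1:ℝ) * u ^ (2*((n:ℝ)-1/2))) * (1-u^2) ^ (-s)) := by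
      rw [Real.rpow_one]; ring
    rw [this, ← Real.rpow_add h0]
    have : (1:ℝ) + 2*((n:ℝ)-1/2) = ((2*n : ℕ) : ℝ) := by push_cast; ring
    rw [this, Real.rpow_natCast]
  rw [hcong, MeasureTheory.integral_const_mul] at hbeta
  rw [← hbeta]; ring

lemma one_sub_sq_image : (fun u : ℝ => 1-u^2) '' Ioo (0:ℝ) 1 = Ioo (0:ℝ) 1 := by
  ext x
  constructor
  · rintro ⟨u, ⟨h0, h1⟩, rfl⟩
    constructor
    · simp only []; nlinarith
    · simp only []; nlinarith
  · rintro ⟨h0, h1⟩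
    refine ⟨Real.sqrt (1-x), ⟨Real.sqrt_pos.2 (by linarith), ?_⟩, ?_⟩
    · exact (Real.sqrt_lt' one_pos).2 (by nlinarith)
    · simp only [Real.sq_sqrt (by linarith : (0:ℝ) ≤ 1-x)]; ring

lemma integrand_subst {u : ℝ} (hu : u ∈ Ioo (0:ℝ) 1) :
    (2*u) * ((1-u^2) ^ ((1:ℝ)/4) * (1 - (1-u^2) ^ ((1:ℝ)/2)) *
        Real.log ((1 - (1-(1-u^2)) ^ ((1:ℝ)/2)) / (1-u^2) ^ ((1:ℝ)/2)) /
        ((1-u^2)*(1-(1-u^2))))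
    = (-2) * (Real.log ((1+u)/(1-u)) / (2*u) * (1-u^2) ^ (-(3/4:ℝ))
            - Real.log ((1+u)/(1-u)) / (2*u) * (1-u^2) ^ (-(1/4:ℝ))) := by
  obtain ⟨h0, h1⟩ := hu
  have hd : (0:ℝ) < 1 - u := by linarith
  have hn : (0:ℝ) < 1 + u := by linarith
  have hx : (0:ℝ) < 1 - u^2 := by nlinarith
  set x := 1 - u^2 with hxdef
  have h12 : 1 - x = u^2 := by rw [hxdef]; ring
  have hsq : (u^2 : ℝ) ^ ((1:ℝ)/2) = u := by
    rw [← Real.rpow_natCast u 2, ← Real.rpow_mul h0.le]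
    norm_num
  -- log simplification
  have hxfact : x ^ ((1:ℝ)/2) = (1-u) ^ ((1:ℝ)/2) * (1+u) ^ ((1:ℝ)/2) := by
    rw [hxdef, show (1:ℝ)-u^2 = (1-u)*(1+u) by ring, Real.mul_rpow hd.le hn.le]
  have hlog : Real.log ((1 - (1-x) ^ ((1:ℝ)/2)) / x ^ ((1:ℝ)/2))
      = -(1/2) * Real.log ((1+u)/(1-u)) := by
    rw [h12, hsq, hxfact, Real.log_div hd.ne' (by positivity),
      Real.log_mul (by positivity) (by positivity),
      Real.log_rpow hd, Real.log_rpow hn,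
      Real.log_div hn.ne' hd.ne']
    ring
  -- algebraic part
  have hpow34 : x ^ ((1:ℝ)/4) = x ^ (-(3/4:ℝ)) * x := by
    rw [← Real.rpow_add_one hx.ne' (-(3/4:ℝ))]; norm_num
  have hpow14 : x ^ ((1:ℝ)/4) * x ^ ((1:ℝ)/2) = x ^ (-(1/4:ℝ)) * x := by
    rw [← Real.rpow_add hx, ← Real.rpow_add_one hx.ne' (-(1/4:ℝ))]; norm_num
  have halg : x ^ ((1:ℝ)/4) * (1 - x ^ ((1:ℝ)/2))
      = (x ^ (-(3/4:ℝ)) - x ^ (-(1/4:ℝ))) * x := by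
    rw [mul_sub, mul_one, hpow14, hpow34]; ring
  rw [hlog, halg, h12]
  have hL := Real.log ((1+u)/(1-u))
  field_simp

lemma main_integral :
    (∫ x in (0:ℝ)..1, x ^ ((1:ℝ)/4) * (1 - x ^ ((1:ℝ)/2)) *
        Real.log ((1 - (1-x) ^ ((1:ℝ)/2)) / x ^ ((1:ℝ)/2)) / (x*(1-x)))
    = -2 * ((∫ u in Ioo (0:ℝ) 1, Real.log ((1+u)/(1-u)) / (2*u) * (1-u^2) ^ (-(3/4:ℝ)))
          - (∫ u in Ioo (0:ℝ) 1, Real.log ((1+u)/(1-u)) / (2*u) * (1-u^2) ^ (-(1/4:ℝ)))) := by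
  rw [intervalIntegral.integral_of_le (by norm_num : (0:ℝ) ≤ 1),
    MeasureTheory.integral_Ioc_eq_integral_Ioo]
  have hderiv : ∀ u ∈ Ioo (0:ℝ) 1,
      HasDerivWithinAt (fun u : ℝ => 1-u^2) (-(2*u)) (Ioo (0:ℝ) 1) u := by
    intro u _
    have := ((hasDerivAt_pow 2 u).const_sub 1).hasDerivWithinAt (s := Ioo (0:ℝ) 1)
    simpa using this
  have hinj : InjOn (fun u : ℝ => 1-u^2) (Ioo (0:ℝ) 1) := by
    intro a ha b hb h
    simp only [] at h
    have h2 : a^2 = b^2 := by linarith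
    have : Real.sqrt (a^2) = Real.sqrt (b^2) := by rw [h2]
    rwa [Real.sqrt_sq ha.1.le, Real.sqrt_sq hb.1.le] at this
  have hsub := MeasureTheory.integral_image_eq_integral_abs_deriv_smul
    measurableSet_Ioo hderiv hinj
    (fun x : ℝ => x ^ ((1:ℝ)/4) * (1 - x ^ ((1:ℝ)/2)) *
        Real.log ((1 - (1-x) ^ ((1:ℝ)/2)) / x ^ ((1:ℝ)/2)) / (x*(1-x)))
  rw [one_sub_sq_image] at hsub
  rw [hsub]
  have hcong : ∫ u in Ioo (0:ℝ) 1, |(-(2*u))| •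
      ((1-u^2) ^ ((1:ℝ)/4) * (1 - (1-u^2) ^ ((1:ℝ)/2)) *
        Real.log ((1 - (1-(1-u^2)) ^ ((1:ℝ)/2)) / (1-u^2) ^ ((1:ℝ)/2)) /
        ((1-u^2)*(1-(1-u^2))))
      = ∫ u in Ioo (0:ℝ) 1,
        (-2) * (Real.log ((1+u)/(1-u)) / (2*u) * (1-u^2) ^ (-(3/4:ℝ))
              - Real.log ((1+u)/(1-u)) / (2*u) * (1-u^2) ^ (-(1/4:ℝ))) := by
    apply MeasureTheory.setIntegral_congr_fun measurableSet_Ioo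
    intro u hu
    simp only [smul_eq_mul]
    rw [abs_neg, abs_of_pos (by linarith [hu.1] : (0:ℝ) < 2*u)]
    exact integrand_subst hu
  rw [hcong, MeasureTheory.integral_const_mul]
  congr 1
  exact MeasureTheory.integral_sub
    (G_integrableOn (by norm_num) (by norm_num))
    (G_integrableOn (by norm_num) (by norm_num))

lemma poch_three_half (n : ℕ) : poch (3/2) n = poch (1/2) n * (2*(n:ℝ)+1) := by
  have h := poch_shift (1/2) n
  have h2 : (1/2 : ℝ) + 1 = 3/2 := by norm_num
  rw [h2] at h
  nlinarith [h]

lemma F32_eq {f : ℝ} (hf : 0 < f) :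
    F32 (1/2) (1/2) 1 (3/2) f 1
      = ∑' n : ℕ, 1/(2*(n:ℝ)+1) * (poch (1/2) n / poch f n) := by
  unfold F32
  congr 1
  funext n
  have hfac : (n.factorial : ℝ) ≠ 0 := Nat.cast_ne_zero.2 n.factorial_ne_zero
  have h1 : poch 1 n = (n.factorial : ℝ) := poch_one n
  have h2 : poch (3/2) n = poch (1/2) n * (2*(n:ℝ)+1) := poch_three_half n
  have hp12 : poch (1/2) n ≠ 0 := (poch_pos (by norm_num) n).ne'
  have hpf : poch f n ≠ 0 := (poch_pos hf n).ne'
  have h2n : (2*(n:ℝ)+1) ≠ 0 := by positivity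
  rw [one_pow, h1, h2]
  field_simp

lemma summand_eq {s : ℝ} (hs0 : 0 < s) (hs1 : s < 1) (n : ℕ) :
    (∫ u in Ioo (0:ℝ) 1, 1/(2*(n:ℝ)+1) * (u^(2*n) * (1-u^2) ^ (-s)))
      = (Real.Gamma (1/2) * Real.Gamma (1-s) / (2 * Real.Gamma (3/2-s)))
          * (1/(2*(n:ℝ)+1) * (poch (1/2) n / poch (3/2-s) n)) := by
  rw [show (fun u : ℝ => 1/(2*(n:ℝ)+1) * (u^(2*n) * (1-u^2) ^ (-s)))
      = fun u : ℝ => (1/(2*(n:ℝ)+1)) * (u^(2*n) * (1-u^2) ^ (-s)) from rfl,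
    MeasureTheory.integral_const_mul, J_eval hs0 hs1 n]
  have hG1 : Real.Gamma ((n:ℝ)+1/2) = poch (1/2) n * Real.Gamma (1/2) := by
    rw [show (n:ℝ)+1/2 = 1/2+(n:ℝ) by ring]
    exact Gamma_poch (by norm_num) n
  have hG2 : Real.Gamma ((n:ℝ)+3/2-s) = poch (3/2-s) n * Real.Gamma (3/2-s) := by
    rw [show (n:ℝ)+3/2-s = (3/2-s)+(n:ℝ) by ring]
    exact Gamma_poch (by linarith) n
  rw [hG1, hG2]
  have hpf : poch (3/2-s) n ≠ 0 := (poch_pos (by linarith) n).ne'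
  have hGf : Real.Gamma (3/2-s) ≠ 0 := (Real.Gamma_pos_of_pos (by linarith)).ne'
  have h2n : (2*(n:ℝ)+1) ≠ 0 := by positivity
  field_simp

lemma F32_value {s : ℝ} (hs0 : 0 < s) (hs : s ≤ 3/4) :
    (Real.Gamma (1/2) * Real.Gamma (1-s) / (2 * Real.Gamma (3/2-s)))
        * F32 (1/2) (1/2) 1 (3/2) (3/2-s) 1
      = ∫ u in Ioo (0:ℝ) 1, Real.log ((1+u)/(1-u)) / (2*u) * (1-u^2) ^ (-s) := by
  have h := hasSumK hs0 hs
  have heq : (fun n : ℕ => ∫ u in Ioo (0:ℝ) 1, 1/(2*(n:ℝ)+1) * (u^(2*n) * (1-u^2) ^ (-s)))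
      = fun n : ℕ => (Real.Gamma (1/2) * Real.Gamma (1-s) / (2 * Real.Gamma (3/2-s)))
          * (1/(2*(n:ℝ)+1) * (poch (1/2) n / poch (3/2-s) n)) := by
    funext n; exact summand_eq hs0 (by linarith) n
  rw [heq] at h
  rw [F32_eq (by linarith : (0:ℝ) < 3/2-s)]
  rw [← tsum_mul_left]
  exact h.tsum_eq

theorem stmt17 :
    -(Real.pi / 32) * ∫ x in (0:ℝ)..1,
        x ^ ((1 : ℝ)/4) * (1 - x ^ ((1 : ℝ)/2)) *
          Real.log ((1 - (1 - x) ^ ((1 : ℝ)/2)) / x ^ ((1 : ℝ)/2)) / (x * (1 - x)) =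
      Real.sqrt Real.pi * Real.Gamma (1/4) ^ 2 / (32 * Real.sqrt 2) *
          F32 (1/2) (1/2) 1 (3/2) (3/4) 1 -
        Real.sqrt Real.pi * Real.Gamma (3/4) ^ 2 / (8 * Real.sqrt 2) *
          F32 (1/2) (1/2) 1 (3/2) (5/4) 1 := by
  have h34 := F32_value (s := 3/4) (by norm_num) (by norm_num)
  have h14 := F32_value (s := 1/4) (by norm_num) (by norm_num)
  norm_num at h34 h14
  rw [main_integral]
  rw [Real.Gamma_one_half_eq] at h34 h14
  -- Gamma identities
  have hG : Real.Gamma (1/4) * Real.Gamma (3/4) = Real.pi * Real.sqrt 2 := by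
    have h := Real.Gamma_mul_Gamma_one_sub (1/4)
    have h1 : (1:ℝ) - 1/4 = 3/4 := by norm_num
    have h2 : Real.pi * (1/4) = Real.pi/4 := by ring
    rw [h1, h2, Real.sin_pi_div_four] at h
    have hs2 : Real.sqrt 2 * Real.sqrt 2 = 2 := Real.mul_self_sqrt (by norm_num)
    have hs2pos : (0:ℝ) < Real.sqrt 2 := by positivity
    rw [h]
    rw [div_div_eq_mul_div, div_eq_iff hs2pos.ne']
    linear_combination (-Real.pi) * hs2
  have hG54 : Real.Gamma (5/4) = (1/4) * Real.Gamma (1/4) := by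
    have := Real.Gamma_add_one (s := 1/4) (by norm_num)
    rw [show (1/4:ℝ)+1 = 5/4 by norm_num] at this
    simpa using this
  have hP14 : (0:ℝ) < Real.Gamma (1/4) := Real.Gamma_pos_of_pos (by norm_num)
  have hP34 : (0:ℝ) < Real.Gamma (3/4) := Real.Gamma_pos_of_pos (by norm_num)
  have hs2pos : (0:ℝ) < Real.sqrt 2 := by positivity
  have hπpos : (0:ℝ) < Real.pi := Real.pi_pos
  have hsπpos : (0:ℝ) < Real.sqrt Real.pi := Real.sqrt_pos.2 hπpos
  have hc1 : Real.sqrt Real.pi * Real.Gamma (1/4) ^ 2 / (32 * Real.sqrt 2)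
      = Real.pi/16 * (Real.sqrt Real.pi * Real.Gamma (1/4) / (2 * Real.Gamma (3/4))) := by
    field_simp
    linear_combination 32 * hG
  have hc2 : Real.sqrt Real.pi * Real.Gamma (3/4) ^ 2 / (8 * Real.sqrt 2)
      = Real.pi/16 * (Real.sqrt Real.pi * Real.Gamma (3/4) / (2 * Real.Gamma (5/4))) := by
    rw [hG54]
    field_simp
    linear_combination 32 * hG
  have e1 : Real.sqrt Real.pi * Real.Gamma (1/4) ^ 2 / (32 * Real.sqrt 2)
        * F32 (1/2) (1/2) 1 (3/2) (3/4) 1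
      = Real.pi/16 * (∫ u in Ioo (0:ℝ) 1,
          Real.log ((1+u)/(1-u)) / (2*u) * (1-u^2) ^ (-(3/4:ℝ))) := by
    rw [hc1, ← h34]; ring
  have e2 : Real.sqrt Real.pi * Real.Gamma (3/4) ^ 2 / (8 * Real.sqrt 2)
        * F32 (1/2) (1/2) 1 (3/2) (5/4) 1
      = Real.pi/16 * (∫ u in Ioo (0:ℝ) 1,
          Real.log ((1+u)/(1-u)) / (2*u) * (1-u^2) ^ (-(1/4:ℝ))) := by
    rw [hc2, ← h14]; ring
  rw [e1, e2]
  ring
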